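/- Let k be a field, let δ ≥ 1 and r ≥ 2 be integers, and let a_0, a_1, …, a_r ∈ k satisfy a_r = 1, a_0^2 = 1, and a_i = a_0·a_{r−i} for all 0 ≤ i ≤ r. Let λ ∈ k satisfy λ^{δr} = a_0 and define the normalized coefficients a_i' := λ^{δi}·a_i / a_0. Set u_1 := (a_1')^r + (a_{r−1}')^r and u_{r−1} := 2·a_1'·a_{r−1}'. Then 2^{r−2}·u_1^2 = u_{r−1}^r. -/

import Mathlib

/-- If `a_r = 1`, `a_0² = 1`, `a_i = a_0·a_(r-i)` for all `0 ≤ i ≤ r`,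
and `λ^(δr) = a_0`, then with the normalized coefficients `a_i' := λ^(δi)·a_i / a_0` the
dihedral invariants `u_1 = (a_1')^r + (a_(r-1)')^r` and `u_(r-1) = 2·a_1'·a_(r-1)'`
satisfy `2^(r-2)·u_1² = u_(r-1)^r`. -/
theorem dihedral_locus_relation {k : Type*} [Field k] (δ r : ℕ) (hδ : 1 ≤ δ) (hr : 2 ≤ r)
    (a : ℕ → k) (har : a r = 1) (ha0 : a 0 ^ 2 = 1)
    (hsym : ∀ i : ℕ, i ≤ r → a i = a 0 * a (r - i))
    (lam : k) (hlam : lam ^ (δ * r) = a 0)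
    (a' : ℕ → k) (ha' : ∀ i : ℕ, a' i = lam ^ (δ * i) * a i / a 0)
    (u1 ur1 : k) (hu1 : u1 = a' 1 ^ r + a' (r - 1) ^ r)
    (hur1 : ur1 = 2 * a' 1 * a' (r - 1)) :
    2 ^ (r - 2) * u1 ^ 2 = ur1 ^ r := by
  obtain ⟨m, rfl⟩ : ∃ m, r = m + 2 := ⟨r - 2, by omega⟩
  have hε : a 0 ≠ 0 := by
    intro h; rw [h] at ha0; simp at ha0
  set L := lam ^ δ with hLdef
  have hL : L ^ (m + 2) = a 0 := by
    rw [hLdef, ← pow_mul]; exact hlam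
  have hA : a (m + 1) = a 0 * a 1 := by
    have h := hsym (m + 1) (by omega)
    rwa [show m + 2 - (m + 1) = 1 from by omega] at h
  have h1 : a' 1 = L * a 1 / a 0 := by
    rw [ha' 1, mul_one, hLdef]
  have h2 : a' (m + 1) = L ^ (m + 1) * a 1 := by
    rw [ha' (m + 1), hA, hLdef, ← pow_mul, mul_comm δ (m+1)]
    field_simp
  have hε1 : (a 0) ^ (m + 1) * (a 0) ^ (m + 1) = 1 := by
    calc (a 0) ^ (m+1) * (a 0) ^ (m+1) = ((a 0)^2)^(m+1) := by ring
    _ = 1 := by rw [ha0, one_pow]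
  have hLpow : L ^ ((m + 1) * (m + 2)) = a 0 ^ (m + 1) := by
    rw [mul_comm, pow_mul, hL]
  have hu1' : u1 = 2 * a 0 ^ (m + 1) * a 1 ^ (m + 2) := by
    rw [hu1, show m + 2 - 1 = m + 1 from by omega, h1, h2]
    rw [div_pow, mul_pow, mul_pow, hL, ← pow_mul, hLpow,
      div_add' _ _ _ (pow_ne_zero _ hε), div_eq_iff (pow_ne_zero _ hε)]
    linear_combination (-(a 0 * a 1 ^ (m+2))) * hε1
  have hur' : ur1 = 2 * a 1 ^ 2 := by
    rw [hur1, show m + 2 - 1 = m + 1 from by omega, h1, h2]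
    field_simp
    linear_combination 2 * a 1 ^ 2 * hL
  rw [hu1', hur', show m + 2 - 2 = m from by omega]
  linear_combination (2 ^ (m+2) * a 1 ^ (2*m+4)) * hε1
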